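/- For the exponential distribution with mean θ₂, the difference A_α(n) := I(f_{Y_{[n:n]}}, f_Y) − I(f_{Y_{[1:n]}}, f_Y) = α(n−1)/(n+1), which is positive when 0 < α ≤ 1 and n > 1, negative when −1 ≤ α < 0 and n > 1, and zero when n = 1 or α = 0. -/

import Mathlib

open MeasureTheory Real Set

lemma my_int_exp {b : ℝ} (hb : 0 < b) :
    ∫ y in Ioi (0:ℝ), exp (-(b*y)) = b⁻¹ := by
  have h := integral_comp_mul_left_Ioi (fun x => exp (-x)) 0 hb
  simp only [mul_zero, smul_eq_mul] at h
  rw [h, integral_exp_neg_Ioi_zero, mul_one]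

lemma my_int_xexp_base : ∫ x in Ioi (0:ℝ), x * exp (-x) = 1 := by
  have h := Real.Gamma_eq_integral (by norm_num : (0:ℝ) < 2)
  rw [Real.Gamma_two] at h
  rw [← h.symm]
  apply setIntegral_congr_fun measurableSet_Ioi
  intro x _
  norm_num [Real.rpow_one, mul_comm]

lemma my_int_xexp {b : ℝ} (hb : 0 < b) :
    ∫ y in Ioi (0:ℝ), y * exp (-(b*y)) = (b^2)⁻¹ := by
  have h := integral_comp_mul_left_Ioi (fun x => x * exp (-x)) 0 hb
  simp only [mul_zero, smul_eq_mul] at h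
  rw [my_int_xexp_base, mul_one] at h
  have h2 : ∫ x in Ioi (0:ℝ), b * (x * exp (-(b*x))) = b⁻¹ := by
    rw [← h]
    apply setIntegral_congr_fun measurableSet_Ioi
    intro x _; ring
  rw [integral_const_mul] at h2
  have hb' : b ≠ 0 := hb.ne'
  field_simp at h2 ⊢
  linarith [h2]

lemma my_intg_exp {b : ℝ} (hb : 0 < b) :
    IntegrableOn (fun y => exp (-(b*y))) (Ioi (0:ℝ)) := by
  simpa [neg_mul] using exp_neg_integrableOn_Ioi 0 hb

lemma my_intg_xexp_base : IntegrableOn (fun x => x * exp (-x)) (Ioi (0:ℝ)) := by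
  have h := Real.GammaIntegral_convergent (by norm_num : (0:ℝ) < 2)
  have h2 : ((2:ℝ) - 1) = 1 := by norm_num
  rw [h2] at h
  simp only [Real.rpow_one] at h
  exact h.congr_fun (fun x _ => mul_comm _ _) measurableSet_Ioi

lemma my_intg_xexp {b : ℝ} (hb : 0 < b) :
    IntegrableOn (fun y => y * exp (-(b*y))) (Ioi (0:ℝ)) := by
  have h := (integrableOn_Ioi_comp_mul_left_iff (fun x => x * exp (-x)) 0 hb).mpr
    (by simpa using my_intg_xexp_base)
  have h2 : IntegrableOn (fun x : ℝ => b⁻¹ * (b * x * exp (-(b*x)))) (Ioi (0:ℝ)) :=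
    h.const_mul b⁻¹
  refine h2.congr_fun (fun x _ => ?_) measurableSet_Ioi
  field_simp

lemma my_Ival (θ c : ℝ) (hθ : 0 < θ) :
    ∫ y in Ioi (0:ℝ),
      (θ⁻¹ * exp (-y/θ) * (1 + c * (1 - 2 * (1 - exp (-y/θ))))) * log (θ⁻¹ * exp (-y/θ))
      = -Real.log θ - 1 + c / 2 := by
  set b : ℝ := θ⁻¹ with hbdef
  have hb : 0 < b := inv_pos.mpr hθ
  have h2b : 0 < 2*b := by linarith
  have hcong : ∀ y : ℝ,
      (θ⁻¹ * exp (-y/θ) * (1 + c * (1 - 2 * (1 - exp (-y/θ))))) * log (θ⁻¹ * exp (-y/θ))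
      = (-(1-c)*b*Real.log θ) * exp (-(b*y)) + (-(1-c)*b^2) * (y * exp (-(b*y)))
        + (-2*c*b*Real.log θ) * exp (-(2*b*y)) + (-2*c*b^2) * (y * exp (-(2*b*y))) := by
    intro y
    have hlog : log (θ⁻¹ * exp (-y/θ)) = -Real.log θ + (-y/θ) := by
      rw [Real.log_mul (inv_ne_zero hθ.ne') (Real.exp_ne_zero _), Real.log_inv, Real.log_exp]
    have hdiv : -y/θ = -(b*y) := by
      rw [neg_div, div_eq_inv_mul, hbdef]
    have hsq : exp (-(2*b*y)) = exp (-(b*y)) * exp (-(b*y)) := by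
      rw [← Real.exp_add]; ring_nf
    rw [hlog, hdiv, hsq]
    ring
  refine (setIntegral_congr_fun measurableSet_Ioi (fun y _ => hcong y)).trans ?_
  have i1 : IntegrableOn (fun y : ℝ => -(1-c)*b*Real.log θ * exp (-(b*y))) (Ioi 0) :=
    (my_intg_exp hb).const_mul _
  have i2 : IntegrableOn (fun y : ℝ => -(1-c)*b^2 * (y * exp (-(b*y)))) (Ioi 0) :=
    (my_intg_xexp hb).const_mul _
  have i3 : IntegrableOn (fun y : ℝ => -2*c*b*Real.log θ * exp (-(2*b*y))) (Ioi 0) :=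
    (my_intg_exp h2b).const_mul _
  have i4 : IntegrableOn (fun y : ℝ => -2*c*b^2 * (y * exp (-(2*b*y)))) (Ioi 0) :=
    (my_intg_xexp h2b).const_mul _
  have i12 : IntegrableOn (fun y : ℝ =>
      -(1-c)*b*Real.log θ * exp (-(b*y)) + -(1-c)*b^2 * (y * exp (-(b*y)))) (Ioi 0) := i1.add i2
  have i123 : IntegrableOn (fun y : ℝ =>
      -(1-c)*b*Real.log θ * exp (-(b*y)) + -(1-c)*b^2 * (y * exp (-(b*y)))
        + -2*c*b*Real.log θ * exp (-(2*b*y))) (Ioi 0) := i12.add i3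
  rw [integral_add i123 i4, integral_add i12 i3, integral_add i1 i2,
      integral_const_mul, integral_const_mul, integral_const_mul, integral_const_mul,
      my_int_exp hb, my_int_xexp hb, my_int_exp h2b, my_int_xexp h2b]
  have hb' : b ≠ 0 := hb.ne'
  field_simp
  ring

/-- For the exponential distribution with mean θ₂,
`A_α(n) = I(f_{Y[n:n]}, f_Y) − I(f_{Y[1:n]}, f_Y) = α(n−1)/(n+1)`, which is positive
for `0 < α ≤ 1, n > 1`, negative for `−1 ≤ α < 0, n > 1`, and zero if `n = 1` or `α = 0`. -/
theorem stmt_7 (θ₂ α : ℝ) (hθ : 0 < θ₂) (hα : |α| ≤ 1)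
    (n : ℕ) (hn : 1 ≤ n)
    (f F : ℝ → ℝ)
    (hf : ∀ y, f y = θ₂⁻¹ * exp (-y / θ₂))
    (hF : ∀ y, F y = 1 - exp (-y / θ₂))
    (frn : ℕ → ℕ → ℝ → ℝ)
    (hfrn : ∀ r n y, frn r n y
      = f y * (1 + α * (((n : ℝ) - 2 * r + 1) / ((n : ℝ) + 1)) * (1 - 2 * F y)))
    (I : (ℝ → ℝ) → ℝ) (hI : ∀ g, I g = -∫ y in Ioi (0:ℝ), g y * log (f y))
    (A : ℝ) (hA : A = I (frn n n) - I (frn 1 n)) :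
    A = α * ((n : ℝ) - 1) / ((n : ℝ) + 1)
    ∧ (0 < α → 1 < n → 0 < A)
    ∧ (α < 0 → 1 < n → A < 0)
    ∧ (n = 1 ∨ α = 0 → A = 0) := by
  have hnpos : (0:ℝ) < (n:ℝ) + 1 := by positivity
  have hIval : ∀ r : ℕ, I (frn r n)
      = -(-Real.log θ₂ - 1 + (α * (((n : ℝ) - 2 * r + 1) / ((n : ℝ) + 1))) / 2) := by
    intro r
    rw [hI]
    congr 1
    have hpt : ∀ y : ℝ, frn r n y * log (f y)
        = (θ₂⁻¹ * exp (-y/θ₂) *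
            (1 + (α * (((n : ℝ) - 2 * r + 1) / ((n : ℝ) + 1))) * (1 - 2 * (1 - exp (-y/θ₂)))))
          * log (θ₂⁻¹ * exp (-y/θ₂)) := by
      intro y
      rw [hfrn, hf, hF]
    simp only [hpt]
    exact my_Ival θ₂ _ hθ
  have hAval : A = α * ((n : ℝ) - 1) / ((n : ℝ) + 1) := by
    rw [hA, hIval n, hIval 1]
    push_cast
    field_simp
    ring
  refine ⟨hAval, ?_, ?_, ?_⟩
  · intro hα0 hn1
    rw [hAval]
    have h1 : (0:ℝ) < (n:ℝ) - 1 := by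
      have : (1:ℝ) < (n:ℝ) := by exact_mod_cast hn1
      linarith
    exact div_pos (mul_pos hα0 h1) hnpos
  · intro hα0 hn1
    rw [hAval]
    have h1 : (0:ℝ) < (n:ℝ) - 1 := by
      have : (1:ℝ) < (n:ℝ) := by exact_mod_cast hn1
      linarith
    exact div_neg_of_neg_of_pos (mul_neg_of_neg_of_pos hα0 h1) hnpos
  · rintro (rfl | rfl) <;> simp [hAval]
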